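/- arXiv:hep-th/9402063 — 2 statements merged into one kernel-verified Lean document; each statement's English description precedes it below -/
import Mathlib

section
/- In the bigraded Weil algebra 𝔄(g), setting 𝒜 = A + α and ℱ = F + ψ + φ, one has the total structure equation (d+δ)𝒜 + ½[𝒜,𝒜] = ℱ and the total Bianchi identity (d+δ)ℱ + [𝒜,ℱ] = 0. -/
open scoped TensorProduct

noncomputable section

/-- The graded bracket on `g ⊗ Ω` induced by `[X⊗P, Y⊗Q] = ⁅X,Y⁆ ⊗ (P*Q)`. -/
def gaBracket (g : Type) [LieRing g] [LieAlgebra ℂ g] (Ω : Type) [Ring Ω] [Algebra ℂ Ω] :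
    (g ⊗[ℂ] Ω) →ₗ[ℂ] (g ⊗[ℂ] Ω) →ₗ[ℂ] (g ⊗[ℂ] Ω) :=
  TensorProduct.map₂
    (LinearMap.mk₂ ℂ (fun X Y => ⁅X, Y⁆)
      (by intros; simp [add_lie]) (by intros; simp [smul_lie])
      (by intros; simp [lie_add]) (by intros; simp [lie_smul]))
    (LinearMap.mul ℂ Ω)

/-- The submodule of `g ⊗ Ω` of `g`-valued elements with components in a submodule `S` of `Ω`. -/
def gvSub (g : Type) [LieRing g] [LieAlgebra ℂ g] {Ω : Type} [AddCommGroup Ω] [Module ℂ Ω]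
    (S : Submodule ℂ Ω) : Submodule ℂ (g ⊗[ℂ] Ω) :=
  LinearMap.range (LinearMap.lTensor g S.subtype)

/-- A bigraded-commutative algebra structure on `Ω` given by bidegree pieces `gr k l`. -/
def IsBigradedCommAlg (Ω : Type) [Ring Ω] [Algebra ℂ Ω] (gr : ℕ → ℕ → Submodule ℂ Ω) : Prop :=
  (1 : Ω) ∈ gr 0 0 ∧
  (∀ k l m n, ∀ a ∈ gr k l, ∀ b ∈ gr m n, a * b ∈ gr (k + m) (l + n)) ∧
  (∀ k l m n, ∀ a ∈ gr k l, ∀ b ∈ gr m n,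
      a * b = ((-1 : ℂ)) ^ ((k + l) * (m + n)) • (b * a)) ∧
  DirectSum.IsInternal (fun p : ℕ × ℕ => gr p.1 p.2)

/-- An antiderivation with respect to the total degree of a bigrading. -/
def IsAntideriv {Ω : Type} [Ring Ω] [Algebra ℂ Ω] (gr : ℕ → ℕ → Submodule ℂ Ω)
    (R : Ω →ₗ[ℂ] Ω) : Prop :=
  ∀ k l, ∀ a ∈ gr k l, ∀ b, R (a * b) = R a * b + ((-1 : ℂ)) ^ (k + l) • (a * R b)

/-- The bigraded Weil algebra data: a bigraded-commutative differential algebra with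
differentials `d`, `δ` of bidegrees `(1,0)`, `(0,1)` and `g`-valued generators
`A, α, F, φ, ψ, ξ, B, β` satisfying the structure equations of Lemma 1.1. -/
structure BigradedWeil (g : Type) [LieRing g] [LieAlgebra ℂ g]
    (𝔄 : Type) [Ring 𝔄] [Algebra ℂ 𝔄] where
  gr : ℕ → ℕ → Submodule ℂ 𝔄
  graded : IsBigradedCommAlg 𝔄 gr
  d : 𝔄 →ₗ[ℂ] 𝔄
  δ : 𝔄 →ₗ[ℂ] 𝔄
  d_antideriv : IsAntideriv gr d
  δ_antideriv : IsAntideriv gr δ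
  d_gr : ∀ k l, ∀ x ∈ gr k l, d x ∈ gr (k + 1) l
  δ_gr : ∀ k l, ∀ x ∈ gr k l, δ x ∈ gr k (l + 1)
  d_sq : ∀ x, d (d x) = 0
  δ_sq : ∀ x, δ (δ x) = 0
  d_δ : ∀ x, d (δ x) + δ (d x) = 0
  A : g ⊗[ℂ] 𝔄
  α : g ⊗[ℂ] 𝔄
  F : g ⊗[ℂ] 𝔄
  φ : g ⊗[ℂ] 𝔄
  ψ : g ⊗[ℂ] 𝔄
  ξ : g ⊗[ℂ] 𝔄
  B : g ⊗[ℂ] 𝔄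
  β : g ⊗[ℂ] 𝔄
  A_mem : A ∈ gvSub g (gr 1 0)
  α_mem : α ∈ gvSub g (gr 0 1)
  F_mem : F ∈ gvSub g (gr 2 0)
  φ_mem : φ ∈ gvSub g (gr 0 2)
  ψ_mem : ψ ∈ gvSub g (gr 1 1)
  ξ_mem : ξ ∈ gvSub g (gr 1 1)
  B_mem : B ∈ gvSub g (gr 2 1)
  β_mem : β ∈ gvSub g (gr 1 2)
  eqF : F = LinearMap.lTensor g d A + (2⁻¹ : ℂ) • gaBracket g 𝔄 A A
  eqφ : φ = LinearMap.lTensor g δ α + (2⁻¹ : ℂ) • gaBracket g 𝔄 α α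
  eqψ : ψ = LinearMap.lTensor g δ A + LinearMap.lTensor g d α + gaBracket g 𝔄 A α
  eqξ : ξ = LinearMap.lTensor g δ A
  eqB : B = LinearMap.lTensor g δ F + gaBracket g 𝔄 α F
  eqβ : β = LinearMap.lTensor g d φ + gaBracket g 𝔄 A φ

/-- The universal property expressing that the bigraded-commutative algebra `𝔄` is free on
the given list of `g`-valued generators with the given bidegrees. -/
def FreeOn (g : Type) [LieRing g] [LieAlgebra ℂ g] {𝔄 : Type} [Ring 𝔄] [Algebra ℂ 𝔄]
    (gr : ℕ → ℕ → Submodule ℂ 𝔄) {m : ℕ} (gens : Fin m → (ℕ × ℕ) × (g ⊗[ℂ] 𝔄)) : Prop :=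
  ∀ (Ω : Type) [Ring Ω] [Algebra ℂ Ω] (grΩ : ℕ → ℕ → Submodule ℂ Ω),
    IsBigradedCommAlg Ω grΩ →
    ∀ v : Fin m → g ⊗[ℂ] Ω,
      (∀ j, v j ∈ gvSub g (grΩ (gens j).1.1 (gens j).1.2)) →
      ∃! h : 𝔄 →ₐ[ℂ] Ω,
        (∀ k l, ∀ x ∈ gr k l, h x ∈ grΩ k l) ∧
        ∀ j, LinearMap.lTensor g h.toLinearMap (gens j).2 = v j

/-- The list of generators of the bigraded Weil algebra with their bidegrees. -/
def BigradedWeil.gens {g : Type} [LieRing g] [LieAlgebra ℂ g] {𝔄 : Type} [Ring 𝔄]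
    [Algebra ℂ 𝔄] (W : BigradedWeil g 𝔄) : Fin 8 → (ℕ × ℕ) × (g ⊗[ℂ] 𝔄) :=
  ![((1, 0), W.A), ((0, 1), W.α), ((2, 0), W.F), ((0, 2), W.φ),
    ((1, 1), W.ψ), ((1, 1), W.ξ), ((2, 1), W.B), ((1, 2), W.β)]

/-- The `i`-th component in `𝔄` of a `g`-valued element of `g ⊗ 𝔄`, w.r.t. a basis of `g`. -/
def coordEv {g : Type} [LieRing g] [LieAlgebra ℂ g] {ι : Type} (b : Module.Basis ι ℂ g)
    {𝔄 : Type} [Ring 𝔄] [Algebra ℂ 𝔄] (i : ι) : g ⊗[ℂ] 𝔄 →ₗ[ℂ] 𝔄 :=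
  (TensorProduct.lid ℂ 𝔄).toLinearMap ∘ₗ LinearMap.rTensor 𝔄 (b.coord i)

/-- Evaluation of a multilinear form `I` on `g` on `g`-valued elements `Z j ∈ g ⊗ 𝔄`,
multiplying the `𝔄`-components in order. -/
def multiEval {g : Type} [LieRing g] [LieAlgebra ℂ g] {ι : Type} [Fintype ι]
    (b : Module.Basis ι ℂ g) {𝔄 : Type} [Ring 𝔄] [Algebra ℂ 𝔄] {n : ℕ}
    (I : MultilinearMap ℂ (fun _ : Fin n => g) ℂ) (Z : Fin n → g ⊗[ℂ] 𝔄) : 𝔄 :=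
  ∑ iv : Fin n → ι, I (fun j => b (iv j)) • (List.ofFn fun j => coordEv b (iv j) (Z j)).prod

/-- `ad`-invariance of a multilinear form on `g`. -/
def IsInvForm {g : Type} [LieRing g] [LieAlgebra ℂ g] {n : ℕ}
    (I : MultilinearMap ℂ (fun _ : Fin n => g) ℂ) : Prop :=
  ∀ (X : g) (v : Fin n → g), ∑ j, I (Function.update v j ⁅v j, X⁆) = 0

/-- Symmetry of a multilinear form on `g`. -/
def IsSymForm {g : Type} [LieRing g] [LieAlgebra ℂ g] {n : ℕ}
    (I : MultilinearMap ℂ (fun _ : Fin n => g) ℂ) : Prop :=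
  ∀ (σ : Equiv.Perm (Fin n)) (v : Fin n → g), I (fun j => v (σ j)) = I v

/-- The five `g`-valued elements `F, ψ, φ, B, β` of the bigraded Weil algebra. -/
def BigradedWeil.genOf {g : Type} [LieRing g] [LieAlgebra ℂ g] {𝔄 : Type} [Ring 𝔄]
    [Algebra ℂ 𝔄] (W : BigradedWeil g 𝔄) : Fin 5 → g ⊗[ℂ] 𝔄 :=
  ![W.F, W.ψ, W.φ, W.B, W.β]

/-- The base `ℬ(g) ⊆ 𝔄(g)`: the span of the invariant "polynomials" `𝓘(F,ψ,φ,B,β)`. -/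
def baseB {g : Type} [LieRing g] [LieAlgebra ℂ g] {ι : Type} [Fintype ι] (b : Module.Basis ι ℂ g)
    {𝔄 : Type} [Ring 𝔄] [Algebra ℂ 𝔄] (W : BigradedWeil g 𝔄) : Submodule ℂ 𝔄 :=
  Submodule.span ℂ { x | ∃ (n : ℕ) (I : MultilinearMap ℂ (fun _ : Fin n => g) ℂ)
      (c : Fin n → Fin 5), IsInvForm I ∧ x = multiEval b I (fun j => W.genOf (c j)) }

end

noncomputable section

section Aux
variable {g : Type} [LieRing g] [LieAlgebra ℂ g] {𝔄 : Type} [Ring 𝔄] [Algebra ℂ 𝔄]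

lemma gaBracket_tmul (X Y : g) (a b : 𝔄) :
    gaBracket g 𝔄 (X ⊗ₜ[ℂ] a) (Y ⊗ₜ[ℂ] b) = ⁅X, Y⁆ ⊗ₜ[ℂ] (a * b) := by
  simp [gaBracket]

lemma tmul_mem_gvSub {S : Submodule ℂ 𝔄} (X : g) {a : 𝔄} (ha : a ∈ S) :
    X ⊗ₜ[ℂ] a ∈ gvSub g S :=
  ⟨X ⊗ₜ[ℂ] (⟨a, ha⟩ : S), by simp⟩

lemma gvSub_induction {S : Submodule ℂ 𝔄} {P : g ⊗[ℂ] 𝔄 → Prop}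
    (h0 : P 0) (hadd : ∀ x y, P x → P y → P (x + y))
    (htmul : ∀ (X : g) (a : 𝔄), a ∈ S → P (X ⊗ₜ[ℂ] a)) :
    ∀ Z ∈ gvSub g S, P Z := by
  rintro Z ⟨z, rfl⟩
  induction z using TensorProduct.induction_on with
  | zero => simpa using h0
  | tmul X s => simpa using htmul X s.1 s.2
  | add x y hx hy => rw [map_add]; exact hadd _ _ hx hy

lemma gvSub_mono {S S' : Submodule ℂ 𝔄} (h : S ≤ S') : gvSub g S ≤ gvSub g S' := by
  intro Z hZ
  exact gvSub_induction (zero_mem _) (fun x y hx hy => add_mem hx hy)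
    (fun X a ha => tmul_mem_gvSub X (h ha)) Z hZ

lemma lTensor_mem_gvSub {S S' : Submodule ℂ 𝔄} {R : 𝔄 →ₗ[ℂ] 𝔄}
    (hR : ∀ a ∈ S, R a ∈ S') :
    ∀ Z ∈ gvSub g S, LinearMap.lTensor g R Z ∈ gvSub g S' := by
  refine gvSub_induction (by simp) (fun x y hx hy => ?_) (fun X a ha => ?_)
  · rw [map_add]; exact add_mem hx hy
  · rw [LinearMap.lTensor_tmul]; exact tmul_mem_gvSub X (hR a ha)

lemma gaBracket_mem_gvSub {S S' S'' : Submodule ℂ 𝔄}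
    (h : ∀ a ∈ S, ∀ b ∈ S', a * b ∈ S'') :
    ∀ Z ∈ gvSub g S, ∀ W ∈ gvSub g S', gaBracket g 𝔄 Z W ∈ gvSub g S'' := by
  refine gvSub_induction ?_ ?_ ?_
  · intro W hW; simp
  · intro x y hx hy W hW
    rw [map_add, LinearMap.add_apply]; exact add_mem (hx W hW) (hy W hW)
  · intro X a ha
    refine gvSub_induction (by simp) (fun u v hu hv => ?_) (fun Y b hb => ?_)
    · rw [map_add]; exact add_mem hu hv
    · rw [gaBracket_tmul]; exact tmul_mem_gvSub _ (h a ha b hb)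

lemma gaBracket_comm {S S' : Submodule ℂ 𝔄} {ε : ℂ}
    (h : ∀ a ∈ S, ∀ b ∈ S', a * b = ε • (b * a)) :
    ∀ Z ∈ gvSub g S, ∀ W ∈ gvSub g S',
      gaBracket g 𝔄 Z W = (-ε) • gaBracket g 𝔄 W Z := by
  refine gvSub_induction ?_ ?_ ?_
  · intro W hW; simp
  · intro x y hx hy W hW
    rw [map_add, LinearMap.add_apply, hx W hW, hy W hW, map_add, smul_add]
  · intro X a ha
    refine gvSub_induction (by simp) (fun u v hu hv => ?_) (fun Y b hb => ?_)
    · rw [map_add, hu, hv, map_add, LinearMap.add_apply, smul_add]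
    · rw [gaBracket_tmul, gaBracket_tmul, h a ha b hb, ← lie_skew Y X,
        TensorProduct.tmul_smul, TensorProduct.neg_tmul, neg_smul, smul_neg, neg_neg]

lemma lTensor_gaBracket {S : Submodule ℂ 𝔄} {R : 𝔄 →ₗ[ℂ] 𝔄} {ε : ℂ}
    (h : ∀ a ∈ S, ∀ b, R (a * b) = R a * b + ε • (a * R b)) :
    ∀ Z ∈ gvSub g S, ∀ W,
      LinearMap.lTensor g R (gaBracket g 𝔄 Z W)
        = gaBracket g 𝔄 (LinearMap.lTensor g R Z) W
          + ε • gaBracket g 𝔄 Z (LinearMap.lTensor g R W) := by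
  refine gvSub_induction ?_ ?_ ?_
  · intro W; simp
  · intro x y hx hy W
    simp only [map_add, LinearMap.add_apply, hx W, hy W, smul_add]
    abel
  · intro X a ha W
    induction W using TensorProduct.induction_on with
    | zero => simp
    | tmul Y b =>
      simp only [gaBracket_tmul, LinearMap.lTensor_tmul, h a ha b,
        TensorProduct.tmul_add, TensorProduct.tmul_smul]
    | add u v hu hv =>
      simp only [map_add, hu, hv, smul_add]
      abel

lemma gaBracket_jacobi {S : Submodule ℂ 𝔄}
    (hS : ∀ a ∈ S, ∀ b ∈ S, a * b = -(b * a)) :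
    ∀ Z₁ ∈ gvSub g S, ∀ Z₂ ∈ gvSub g S, ∀ Z₃ ∈ gvSub g S,
      gaBracket g 𝔄 (gaBracket g 𝔄 Z₁ Z₂) Z₃ + gaBracket g 𝔄 (gaBracket g 𝔄 Z₂ Z₃) Z₁
        + gaBracket g 𝔄 (gaBracket g 𝔄 Z₃ Z₁) Z₂ = 0 := by
  refine gvSub_induction ?_ ?_ ?_
  · intro Z₂ h₂ Z₃ h₃; simp
  · intro x y hx hy Z₂ h₂ Z₃ h₃
    have Hx := hx Z₂ h₂ Z₃ h₃
    have Hy := hy Z₂ h₂ Z₃ h₃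
    simp only [map_add, LinearMap.add_apply] at Hx Hy ⊢
    linear_combination (norm := abel) Hx + Hy
  · intro X a ha
    refine gvSub_induction ?_ ?_ ?_
    · intro Z₃ h₃; simp
    · intro x y hx hy Z₃ h₃
      have Hx := hx Z₃ h₃
      have Hy := hy Z₃ h₃
      simp only [map_add, LinearMap.add_apply] at Hx Hy ⊢
      linear_combination (norm := abel) Hx + Hy
    · intro Y b hb
      refine gvSub_induction ?_ ?_ ?_
      · simp
      · intro x y hx hy
        simp only [map_add, LinearMap.add_apply] at hx hy ⊢
        linear_combination (norm := abel) hx + hy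
      · intro Wv c hc
        rw [gaBracket_tmul, gaBracket_tmul, gaBracket_tmul, gaBracket_tmul,
          gaBracket_tmul, gaBracket_tmul]
        have e1 : b * c * a = a * b * c := by
          rw [mul_assoc, hS c hc a ha, mul_neg, ← mul_assoc, hS b hb a ha, neg_mul, neg_neg]
        have e2 : c * a * b = a * (b * c) := by
          rw [hS c hc a ha, neg_mul, mul_assoc, hS c hc b hb, mul_neg, neg_neg]
        have hl : ⁅⁅X, Y⁆, Wv⁆ + ⁅⁅Y, Wv⁆, X⁆ + ⁅⁅Wv, X⁆, Y⁆ = (0 : g) := by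
          have hj := lie_jacobi X Y Wv
          rw [← lie_skew ⁅X, Y⁆ Wv, ← lie_skew ⁅Y, Wv⁆ X, ← lie_skew ⁅Wv, X⁆ Y]
          linear_combination (norm := abel) -hj
        rw [e1, e2, ← mul_assoc, ← TensorProduct.add_tmul, ← TensorProduct.add_tmul,
          hl, TensorProduct.zero_tmul]
end Aux

/-- with `𝒜 = A + α` and `ℱ = F + ψ + φ`, one has
`(d+δ)𝒜 + ½[𝒜,𝒜] = ℱ` and `(d+δ)ℱ + [𝒜,ℱ] = 0`. -/


theorem stmt_6 (g : Type) [LieRing g] [LieAlgebra ℂ g] [FiniteDimensional ℂ g]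
    (𝔄 : Type) [Ring 𝔄] [Algebra ℂ 𝔄] (W : BigradedWeil g 𝔄) :
    LinearMap.lTensor g (W.d + W.δ) (W.A + W.α)
        + (2⁻¹ : ℂ) • gaBracket g 𝔄 (W.A + W.α) (W.A + W.α) = W.F + W.ψ + W.φ ∧
    LinearMap.lTensor g (W.d + W.δ) (W.F + W.ψ + W.φ)
        + gaBracket g 𝔄 (W.A + W.α) (W.F + W.ψ + W.φ) = 0 := by
  obtain ⟨-, hmul, hcomm, -⟩ := W.graded
  set S : Submodule ℂ 𝔄 := W.gr 1 0 ⊔ W.gr 0 1 with hSdef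
  set T : Submodule ℂ 𝔄 := (W.gr 2 0 ⊔ W.gr 1 1) ⊔ W.gr 0 2 with hTdef
  -- odd elements anticommute
  have hSS : ∀ a ∈ S, ∀ b ∈ S, a * b = -(b * a) := by
    intro a ha b hb
    obtain ⟨a1, ha1, a2, ha2, rfl⟩ := Submodule.mem_sup.mp ha
    obtain ⟨b1, hb1, b2, hb2, rfl⟩ := Submodule.mem_sup.mp hb
    have c11 : a1 * b1 = -(b1 * a1) := by simpa using hcomm 1 0 1 0 a1 ha1 b1 hb1
    have c12 : a1 * b2 = -(b2 * a1) := by simpa using hcomm 1 0 0 1 a1 ha1 b2 hb2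
    have c21 : a2 * b1 = -(b1 * a2) := by simpa using hcomm 0 1 1 0 a2 ha2 b1 hb1
    have c22 : a2 * b2 = -(b2 * a2) := by simpa using hcomm 0 1 0 1 a2 ha2 b2 hb2
    simp only [add_mul, mul_add, c11, c12, c21, c22, neg_add]
    abel
  -- odd times even commute
  have hST1 : ∀ a ∈ S, ∀ b ∈ T, a * b = (1 : ℂ) • (b * a) := by
    intro a ha b hb
    obtain ⟨a1, ha1, a2, ha2, rfl⟩ := Submodule.mem_sup.mp ha
    obtain ⟨b', hb', b3, hb3, rfl⟩ := Submodule.mem_sup.mp hb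
    obtain ⟨b1, hb1, b2, hb2, rfl⟩ := Submodule.mem_sup.mp hb'
    have c11 : a1 * b1 = b1 * a1 := by simpa using hcomm 1 0 2 0 a1 ha1 b1 hb1
    have c12 : a1 * b2 = b2 * a1 := by simpa using hcomm 1 0 1 1 a1 ha1 b2 hb2
    have c13 : a1 * b3 = b3 * a1 := by simpa using hcomm 1 0 0 2 a1 ha1 b3 hb3
    have c21 : a2 * b1 = b1 * a2 := by simpa using hcomm 0 1 2 0 a2 ha2 b1 hb1
    have c22 : a2 * b2 = b2 * a2 := by simpa using hcomm 0 1 1 1 a2 ha2 b2 hb2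
    have c23 : a2 * b3 = b3 * a2 := by simpa using hcomm 0 1 0 2 a2 ha2 b3 hb3
    simp only [one_smul, add_mul, mul_add, c11, c12, c13, c21, c22, c23]
    abel
  have hTS1 : ∀ a ∈ T, ∀ b ∈ S, a * b = (1 : ℂ) • (b * a) := by
    intro a ha b hb
    rw [one_smul]
    have h := hST1 b hb a ha
    rw [one_smul] at h
    exact h.symm
  -- products of odd elements are even
  have hmulSS : ∀ a ∈ S, ∀ b ∈ S, a * b ∈ T := by
    intro a ha b hb
    obtain ⟨a1, ha1, a2, ha2, rfl⟩ := Submodule.mem_sup.mp ha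
    obtain ⟨b1, hb1, b2, hb2, rfl⟩ := Submodule.mem_sup.mp hb
    have m11 : a1 * b1 ∈ W.gr 2 0 := by simpa using hmul 1 0 1 0 a1 ha1 b1 hb1
    have m12 : a1 * b2 ∈ W.gr 1 1 := by simpa using hmul 1 0 0 1 a1 ha1 b2 hb2
    have m21 : a2 * b1 ∈ W.gr 1 1 := by simpa using hmul 0 1 1 0 a2 ha2 b1 hb1
    have m22 : a2 * b2 ∈ W.gr 0 2 := by simpa using hmul 0 1 0 1 a2 ha2 b2 hb2
    have e : (a1 + a2) * (b1 + b2) = a1 * b1 + a1 * b2 + a2 * b1 + a2 * b2 := by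
      rw [add_mul, mul_add, mul_add]; abel
    rw [e]
    exact add_mem (add_mem (add_mem
      (Submodule.mem_sup_left (Submodule.mem_sup_left m11))
      (Submodule.mem_sup_left (Submodule.mem_sup_right m12)))
      (Submodule.mem_sup_left (Submodule.mem_sup_right m21)))
      (Submodule.mem_sup_right m22)
  -- D = d + δ is an antiderivation on odd elements
  have hDer : ∀ a ∈ S, ∀ b, (W.d + W.δ) (a * b)
      = (W.d + W.δ) a * b + (-1 : ℂ) • (a * (W.d + W.δ) b) := by
    intro a ha b
    obtain ⟨a1, ha1, a2, ha2, rfl⟩ := Submodule.mem_sup.mp ha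
    have d1 := W.d_antideriv 1 0 a1 ha1 b
    have d2 := W.d_antideriv 0 1 a2 ha2 b
    have e1 := W.δ_antideriv 1 0 a1 ha1 b
    have e2 := W.δ_antideriv 0 1 a2 ha2 b
    norm_num at d1 d2 e1 e2
    simp only [LinearMap.add_apply, add_mul, mul_add, map_add, d1, d2, e1, e2,
      neg_smul, one_smul, smul_add]
    abel
  -- D maps odd to even
  have hDmem : ∀ a ∈ S, (W.d + W.δ) a ∈ T := by
    intro a ha
    obtain ⟨a1, ha1, a2, ha2, rfl⟩ := Submodule.mem_sup.mp ha
    have k1 : W.d a1 ∈ W.gr 2 0 := by simpa using W.d_gr 1 0 a1 ha1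
    have k2 : W.δ a1 ∈ W.gr 1 1 := by simpa using W.δ_gr 1 0 a1 ha1
    have k3 : W.d a2 ∈ W.gr 1 1 := by simpa using W.d_gr 0 1 a2 ha2
    have k4 : W.δ a2 ∈ W.gr 0 2 := by simpa using W.δ_gr 0 1 a2 ha2
    simp only [LinearMap.add_apply, map_add]
    exact add_mem
      (add_mem (Submodule.mem_sup_left (Submodule.mem_sup_left k1))
        (Submodule.mem_sup_left (Submodule.mem_sup_right k2)))
      (add_mem (Submodule.mem_sup_left (Submodule.mem_sup_right k3))
        (Submodule.mem_sup_right k4))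
  have hDD : ∀ x, (W.d + W.δ) ((W.d + W.δ) x) = 0 := by
    intro x
    have h := W.d_δ x
    simp only [LinearMap.add_apply, map_add, W.d_sq, W.δ_sq]
    linear_combination (norm := abel) h
  have h𝒜 : W.A + W.α ∈ gvSub g S :=
    add_mem (gvSub_mono le_sup_left W.A_mem) (gvSub_mono le_sup_right W.α_mem)
  -- part 1
  have hαA : gaBracket g 𝔄 W.α W.A = gaBracket g 𝔄 W.A W.α := by
    have hc : ∀ a ∈ W.gr 0 1, ∀ b ∈ W.gr 1 0, a * b = (-1 : ℂ) • (b * a) := by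
      intro a ha b hb
      rw [neg_smul, one_smul]
      simpa using hcomm 0 1 1 0 a ha b hb
    have h := gaBracket_comm hc W.α W.α_mem W.A W.A_mem
    simpa using h
  have key1 : LinearMap.lTensor g (W.d + W.δ) (W.A + W.α)
      + (2⁻¹ : ℂ) • gaBracket g 𝔄 (W.A + W.α) (W.A + W.α) = W.F + W.ψ + W.φ := by
    rw [W.eqF, W.eqψ, W.eqφ, LinearMap.lTensor_add]
    simp only [LinearMap.add_apply, map_add]
    rw [hαA]
    module
  refine ⟨key1, ?_⟩
  -- part 2, stated abstractly
  have main2 : ∀ (Dm : 𝔄 →ₗ[ℂ] 𝔄) (Am Fm : g ⊗[ℂ] 𝔄),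
      (∀ a ∈ S, ∀ b, Dm (a * b) = Dm a * b + (-1 : ℂ) • (a * Dm b)) →
      (∀ a ∈ S, Dm a ∈ T) →
      (∀ x, Dm (Dm x) = 0) →
      Am ∈ gvSub g S →
      Fm = LinearMap.lTensor g Dm Am + (2⁻¹ : ℂ) • gaBracket g 𝔄 Am Am →
      LinearMap.lTensor g Dm Fm + gaBracket g 𝔄 Am Fm = 0 := by
    intro Dm Am Fm hDer' hDmem' hDD' hAm hFm
    subst hFm
    have hDAm : LinearMap.lTensor g Dm Am ∈ gvSub g T :=
      lTensor_mem_gvSub hDmem' _ hAm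
    have hBB : gaBracket g 𝔄 Am Am ∈ gvSub g T :=
      gaBracket_mem_gvSub hmulSS _ hAm _ hAm
    have h1 : LinearMap.lTensor g Dm (LinearMap.lTensor g Dm Am) = 0 := by
      rw [← LinearMap.lTensor_comp_apply]
      have hz : Dm ∘ₗ Dm = 0 := LinearMap.ext hDD'
      rw [hz, LinearMap.lTensor_zero, LinearMap.zero_apply]
    have h2 := lTensor_gaBracket hDer' Am hAm Am
    have h3 := gaBracket_comm hTS1 _ hDAm Am hAm
    have hj := gaBracket_jacobi hSS Am hAm Am hAm Am hAm
    have h4 : gaBracket g 𝔄 (gaBracket g 𝔄 Am Am) Am = 0 := by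
      have h3' : (3 : ℂ) • gaBracket g 𝔄 (gaBracket g 𝔄 Am Am) Am = 0 := by
        linear_combination (norm := module) hj
      exact (smul_eq_zero.mp h3').resolve_left (by norm_num)
    have h5 := gaBracket_comm hST1 Am hAm _ hBB
    simp only [map_add, map_smul]
    rw [h1, h2, h3, h5, h4]
    module
  exact main2 (W.d + W.δ) (W.A + W.α) (W.F + W.ψ + W.φ) hDer hDmem hDD h𝒜 key1.symm


end
end

section
/- Let d₁, d₂ be the unique antiderivations of 𝔄(g) with d₁ψ = −B, d₁φ = β, d₁(other generators) = 0 and d₂B = −[F,ψ], d₂β = [F,φ], d₂(other generators) = 0. Then the restriction of the differential d to the base ℬ(g) coincides with the restriction of d₁ + d₂. -/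
open scoped TensorProduct

noncomputable section
set_option linter.unusedSectionVars false
namespace Stmt9

open Function LinearMap

variable {g : Type} [LieRing g] [LieAlgebra ℂ g]
variable {ι : Type} [Fintype ι]
variable {𝔄 : Type} [Ring 𝔄] [Algebra ℂ 𝔄]

lemma coordEv_tmul (b : Module.Basis ι ℂ g) (i : ι) (x : g) (a : 𝔄) :
    coordEv b i (x ⊗ₜ[ℂ] a) = b.coord i x • a := by
  simp [coordEv]

lemma expand (b : Module.Basis ι ℂ g) (Z : g ⊗[ℂ] 𝔄) :
    ∑ i, b i ⊗ₜ[ℂ] coordEv b i Z = Z := by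
  induction Z using TensorProduct.induction_on with
  | zero => simp
  | tmul x a =>
      have : ∀ i : ι, b i ⊗ₜ[ℂ] coordEv b i (x ⊗ₜ[ℂ] a) = (b.repr x i • b i) ⊗ₜ[ℂ] a := by
        intro i
        rw [coordEv_tmul, TensorProduct.tmul_smul, TensorProduct.smul_tmul', Module.Basis.coord_apply]
      rw [Finset.sum_congr rfl fun i _ => this i, ← TensorProduct.sum_tmul, Module.Basis.sum_repr]
  | add u v hu hv =>
      simp only [map_add, TensorProduct.tmul_add, Finset.sum_add_distrib, hu, hv]

lemma coord_ext (b : Module.Basis ι ℂ g) {Z Z' : g ⊗[ℂ] 𝔄}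
    (h : ∀ i, coordEv b i Z = coordEv b i Z') : Z = Z' := by
  rw [← expand b Z, ← expand b Z']
  exact Finset.sum_congr rfl fun i _ => by rw [h i]

lemma coordEv_lTensor (b : Module.Basis ι ℂ g) (R : 𝔄 →ₗ[ℂ] 𝔄) (i : ι) (Z : g ⊗[ℂ] 𝔄) :
    coordEv b i (LinearMap.lTensor g R Z) = R (coordEv b i Z) := by
  induction Z using TensorProduct.induction_on with
  | zero => simp
  | tmul x a => rw [LinearMap.lTensor_tmul, coordEv_tmul, coordEv_tmul, map_smul]
  | add u v hu hv => simp only [map_add, hu, hv]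

lemma coord_mem_of_gvSub {S : Submodule ℂ 𝔄} {Z : g ⊗[ℂ] 𝔄} (b : Module.Basis ι ℂ g)
    (h : Z ∈ gvSub g S) (i : ι) : coordEv b i Z ∈ S := by
  obtain ⟨y, rfl⟩ := h
  induction y using TensorProduct.induction_on with
  | zero => simp
  | tmul x s =>
      rw [LinearMap.lTensor_tmul, coordEv_tmul]
      exact S.smul_mem _ s.2
  | add u v hu hv => rw [map_add, map_add]; exact S.add_mem hu hv

lemma gaBracket_tmul (x y : g) (a c : 𝔄) :
    gaBracket g 𝔄 (x ⊗ₜ[ℂ] a) (y ⊗ₜ[ℂ] c) = ⁅x, y⁆ ⊗ₜ[ℂ] (a * c) := by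
  simp [gaBracket]

lemma gaBracket_eq_sum (b : Module.Basis ι ℂ g) (Z W : g ⊗[ℂ] 𝔄) :
    gaBracket g 𝔄 Z W
      = ∑ p, ∑ q, ⁅b p, b q⁆ ⊗ₜ[ℂ] (coordEv b p Z * coordEv b q W) := by
  conv_lhs => rw [← expand b Z, ← expand b W]
  rw [map_sum, Finset.sum_comm]
  refine Finset.sum_congr rfl fun q _ => ?_
  rw [map_sum, LinearMap.sum_apply]
  exact Finset.sum_congr rfl fun p _ => gaBracket_tmul _ _ _ _

lemma coordEv_gaBracket (b : Module.Basis ι ℂ g) (i : ι) (Z W : g ⊗[ℂ] 𝔄) :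
    coordEv b i (gaBracket g 𝔄 Z W)
      = ∑ p, ∑ q, b.coord i ⁅b p, b q⁆ • (coordEv b p Z * coordEv b q W) := by
  rw [gaBracket_eq_sum b, map_sum]
  refine Finset.sum_congr rfl fun p _ => ?_
  rw [map_sum]
  exact Finset.sum_congr rfl fun q _ => coordEv_tmul _ _ _ _

end Stmt9
end
noncomputable section
set_option linter.unusedSectionVars false
set_option maxHeartbeats 1000000
namespace Stmt9

open Function LinearMap

variable {g : Type} [LieRing g] [LieAlgebra ℂ g]
variable {ι : Type} [Fintype ι]
variable {𝔄 : Type} [Ring 𝔄] [Algebra ℂ 𝔄]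
variable {gr : ℕ → ℕ → Submodule ℂ 𝔄}

lemma gaBracket_sum_left {γ : Type} (s : Finset γ) (f : γ → g ⊗[ℂ] 𝔄) (V : g ⊗[ℂ] 𝔄) :
    gaBracket g 𝔄 (∑ x ∈ s, f x) V = ∑ x ∈ s, gaBracket g 𝔄 (f x) V := by
  rw [map_sum, LinearMap.sum_apply]

lemma gaBracket_tmul_right (b : Module.Basis ι ℂ g) (Z : g ⊗[ℂ] 𝔄) (y : g) (c : 𝔄) :
    gaBracket g 𝔄 Z (y ⊗ₜ[ℂ] c) = ∑ p, ⁅b p, y⁆ ⊗ₜ[ℂ] (coordEv b p Z * c) := by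
  conv_lhs => rw [← expand b Z]
  rw [gaBracket_sum_left]
  exact Finset.sum_congr rfl fun p _ => gaBracket_tmul _ _ _ _

lemma gaBracket_tmul_left (b : Module.Basis ι ℂ g) (x : g) (a : 𝔄) (V : g ⊗[ℂ] 𝔄) :
    gaBracket g 𝔄 (x ⊗ₜ[ℂ] a) V = ∑ q, ⁅x, b q⁆ ⊗ₜ[ℂ] (a * coordEv b q V) := by
  conv_lhs => rw [← expand b V]
  rw [map_sum]
  exact Finset.sum_congr rfl fun q _ => gaBracket_tmul _ _ _ _

lemma gaBracket_symm (b : Module.Basis ι ℂ g)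
    (hcomm : ∀ k l m n, ∀ a ∈ gr k l, ∀ b ∈ gr m n,
      a * b = ((-1 : ℂ)) ^ ((k + l) * (m + n)) • (b * a))
    {k l m n : ℕ} {Z W : g ⊗[ℂ] 𝔄}
    (hZ : ∀ i, coordEv b i Z ∈ gr k l) (hW : ∀ i, coordEv b i W ∈ gr m n) :
    gaBracket g 𝔄 Z W = ((-1 : ℂ)) ^ ((k + l) * (m + n) + 1) • gaBracket g 𝔄 W Z := by
  rw [gaBracket_eq_sum b Z W, gaBracket_eq_sum b W Z, Finset.smul_sum, Finset.sum_comm]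
  refine Finset.sum_congr rfl fun p _ => ?_
  rw [Finset.smul_sum]
  refine Finset.sum_congr rfl fun q _ => ?_
  rw [hcomm k l m n _ (hZ q) _ (hW p), ← lie_skew (b p) (b q), mul_comm (k + l) (m + n)]
  rw [TensorProduct.neg_tmul, TensorProduct.tmul_smul, pow_succ, mul_smul, neg_one_smul,
    smul_neg, smul_neg, neg_neg]

lemma lTensor_gaBracket (b : Module.Basis ι ℂ g) {R : 𝔄 →ₗ[ℂ] 𝔄} (hR : IsAntideriv gr R)
    {k l : ℕ} {Z : g ⊗[ℂ] 𝔄} (W : g ⊗[ℂ] 𝔄) (hZ : ∀ i, coordEv b i Z ∈ gr k l) :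
    LinearMap.lTensor g R (gaBracket g 𝔄 Z W)
      = gaBracket g 𝔄 (LinearMap.lTensor g R Z) W
        + ((-1 : ℂ)) ^ (k + l) • gaBracket g 𝔄 Z (LinearMap.lTensor g R W) := by
  rw [gaBracket_eq_sum b Z W, map_sum, gaBracket_eq_sum b (LinearMap.lTensor g R Z) W,
    gaBracket_eq_sum b Z (LinearMap.lTensor g R W), Finset.smul_sum,
    ← Finset.sum_add_distrib]
  refine Finset.sum_congr rfl fun p _ => ?_
  rw [map_sum, Finset.smul_sum, ← Finset.sum_add_distrib]
  refine Finset.sum_congr rfl fun q _ => ?_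
  rw [LinearMap.lTensor_tmul, coordEv_lTensor, coordEv_lTensor,
    hR k l _ (hZ p) _, TensorProduct.tmul_add, TensorProduct.tmul_smul]

lemma gaBracket_jacobi (b : Module.Basis ι ℂ g)
    (hcomm : ∀ k l m n, ∀ a ∈ gr k l, ∀ b ∈ gr m n,
      a * b = ((-1 : ℂ)) ^ ((k + l) * (m + n)) • (b * a))
    {k l m n : ℕ} {Z W : g ⊗[ℂ] 𝔄} (V : g ⊗[ℂ] 𝔄)
    (hZ : ∀ i, coordEv b i Z ∈ gr k l) (hW : ∀ i, coordEv b i W ∈ gr m n) :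
    gaBracket g 𝔄 Z (gaBracket g 𝔄 W V)
      = gaBracket g 𝔄 (gaBracket g 𝔄 Z W) V
        + ((-1 : ℂ)) ^ ((k + l) * (m + n)) • gaBracket g 𝔄 W (gaBracket g 𝔄 Z V) := by
  have e1 : gaBracket g 𝔄 Z (gaBracket g 𝔄 W V)
      = ∑ p, ∑ q, ∑ r, ⁅b p, ⁅b q, b r⁆⁆ ⊗ₜ[ℂ]
          (coordEv b p Z * (coordEv b q W * coordEv b r V)) := by
    calc gaBracket g 𝔄 Z (gaBracket g 𝔄 W V)
        = ∑ q, ∑ r, ∑ p, ⁅b p, ⁅b q, b r⁆⁆ ⊗ₜ[ℂ]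
            (coordEv b p Z * (coordEv b q W * coordEv b r V)) := by
          rw [gaBracket_eq_sum b W V, map_sum]
          refine Finset.sum_congr rfl fun q _ => ?_
          rw [map_sum]
          exact Finset.sum_congr rfl fun r _ => gaBracket_tmul_right b Z _ _
      _ = ∑ q, ∑ p, ∑ r, _ := Finset.sum_congr rfl fun q _ => Finset.sum_comm
      _ = ∑ p, ∑ q, ∑ r, _ := Finset.sum_comm
  have e2 : gaBracket g 𝔄 (gaBracket g 𝔄 Z W) V
      = ∑ p, ∑ q, ∑ r, ⁅⁅b p, b q⁆, b r⁆ ⊗ₜ[ℂ]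
          ((coordEv b p Z * coordEv b q W) * coordEv b r V) := by
    rw [gaBracket_eq_sum b Z W, gaBracket_sum_left]
    refine Finset.sum_congr rfl fun p _ => ?_
    rw [gaBracket_sum_left]
    exact Finset.sum_congr rfl fun q _ => gaBracket_tmul_left b _ _ V
  have e3 : gaBracket g 𝔄 W (gaBracket g 𝔄 Z V)
      = ∑ p, ∑ q, ∑ r, ⁅b q, ⁅b p, b r⁆⁆ ⊗ₜ[ℂ]
          (coordEv b q W * (coordEv b p Z * coordEv b r V)) := by
    calc gaBracket g 𝔄 W (gaBracket g 𝔄 Z V)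
        = ∑ p, ∑ r, ∑ q, ⁅b q, ⁅b p, b r⁆⁆ ⊗ₜ[ℂ]
            (coordEv b q W * (coordEv b p Z * coordEv b r V)) := by
          rw [gaBracket_eq_sum b Z V, map_sum]
          refine Finset.sum_congr rfl fun p _ => ?_
          rw [map_sum]
          exact Finset.sum_congr rfl fun r _ => gaBracket_tmul_right b W _ _
      _ = ∑ p, ∑ q, ∑ r, _ := Finset.sum_congr rfl fun p _ => Finset.sum_comm
  rw [e1, e2, e3, Finset.smul_sum, ← Finset.sum_add_distrib]
  refine Finset.sum_congr rfl fun p _ => ?_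
  rw [Finset.smul_sum, ← Finset.sum_add_distrib]
  refine Finset.sum_congr rfl fun q _ => ?_
  rw [Finset.smul_sum, ← Finset.sum_add_distrib]
  refine Finset.sum_congr rfl fun r _ => ?_
  rw [leibniz_lie (b p) (b q) (b r), TensorProduct.add_tmul, mul_assoc]
  congr 1
  conv_lhs => rw [← mul_assoc, hcomm k l m n _ (hZ p) _ (hW q), smul_mul_assoc, mul_assoc]
  rw [TensorProduct.tmul_smul]

end Stmt9
end
noncomputable section
set_option linter.unusedSectionVars false
set_option maxHeartbeats 1000000
namespace Stmt9

open Function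

variable {𝔄 : Type} [Ring 𝔄] [Algebra ℂ 𝔄]
variable {gr : ℕ → ℕ → Submodule ℂ 𝔄}

def pf {n : ℕ} (a : Fin n → 𝔄) : 𝔄 := (List.ofFn a).prod

lemma pf_zero (a : Fin 0 → 𝔄) : pf a = 1 := by simp [pf]

lemma pf_succ {n : ℕ} (a : Fin (n + 1) → 𝔄) : pf a = a 0 * pf (Fin.tail a) := by
  rw [pf, List.ofFn_succ, List.prod_cons]; rfl

lemma pf_update_exists {n : ℕ} (a : Fin n → 𝔄) (j : Fin n) :
    ∃ u v : 𝔄, ∀ x, pf (Function.update a j x) = u * x * v := by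
  induction n with
  | zero => exact j.elim0
  | succ n ih =>
    cases j using Fin.cases with
    | zero =>
        refine ⟨1, pf (Fin.tail a), fun x => ?_⟩
        rw [pf_succ, Function.update_self, Fin.tail_update_zero, one_mul]
    | succ j =>
        obtain ⟨u, v, hu⟩ := ih (Fin.tail a) j
        refine ⟨a 0 * u, v, fun x => ?_⟩
        rw [pf_succ, Function.update_of_ne (Fin.succ_ne_zero j).symm,
          Fin.tail_update_succ, hu, mul_assoc, mul_assoc, mul_assoc]

lemma pf_update_sum {n : ℕ} (a : Fin n → 𝔄) (j : Fin n) {γ : Type} (s : Finset γ)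
    (f : γ → 𝔄) :
    pf (Function.update a j (∑ t ∈ s, f t)) = ∑ t ∈ s, pf (Function.update a j (f t)) := by
  obtain ⟨u, v, hu⟩ := pf_update_exists a j
  simp only [hu, Finset.mul_sum, Finset.sum_mul]

lemma pf_update_smul {n : ℕ} (a : Fin n → 𝔄) (j : Fin n) (c : ℂ) (x : 𝔄) :
    pf (Function.update a j (c • x)) = c • pf (Function.update a j x) := by
  obtain ⟨u, v, hu⟩ := pf_update_exists a j
  simp only [hu, mul_smul_comm, smul_mul_assoc]

lemma pf_update_neg {n : ℕ} (a : Fin n → 𝔄) (j : Fin n) (x : 𝔄) :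
    pf (Function.update a j (-x)) = -pf (Function.update a j x) := by
  obtain ⟨u, v, hu⟩ := pf_update_exists a j
  simp only [hu, mul_neg, neg_mul]

lemma R_one {R : 𝔄 →ₗ[ℂ] 𝔄} (hR : IsAntideriv gr R) (h1 : (1 : 𝔄) ∈ gr 0 0) :
    R 1 = 0 := by
  have h := hR 0 0 1 h1 1
  simp only [one_mul, mul_one] at h
  have h' : R 1 = R 1 + R 1 := by simpa using h
  exact left_eq_add.mp h'

/-- total degree of prefix before `j` -/
def esgn {n : ℕ} (dp : Fin n → ℕ × ℕ) (j : Fin n) : ℕ :=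
  ∑ k : Fin n, if (k : ℕ) < (j : ℕ) then (dp k).1 + (dp k).2 else 0

lemma esgn_zero {n : ℕ} (dp : Fin (n + 1) → ℕ × ℕ) : esgn dp 0 = 0 := by
  simp [esgn]

lemma esgn_succ {n : ℕ} (dp : Fin (n + 1) → ℕ × ℕ) (j : Fin n) :
    esgn dp j.succ = ((dp 0).1 + (dp 0).2) + esgn (Fin.tail dp) j := by
  rw [esgn, Fin.sum_univ_succ]
  simp only [Fin.val_succ, Fin.val_zero]
  simp only [Nat.zero_lt_succ, ↓reduceIte]
  congr 1
  rw [esgn]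
  refine Finset.sum_congr rfl fun k _ => ?_
  simp [Fin.tail, Nat.add_lt_add_iff_right]

lemma antideriv_pf {R : 𝔄 →ₗ[ℂ] 𝔄} (hR : IsAntideriv gr R) (h1 : (1 : 𝔄) ∈ gr 0 0)
    {n : ℕ} (a : Fin n → 𝔄) (dp : Fin n → ℕ × ℕ)
    (ha : ∀ j, a j ∈ gr (dp j).1 (dp j).2) :
    R (pf a) = ∑ j, ((-1 : ℂ)) ^ (esgn dp j) • pf (Function.update a j (R (a j))) := by
  induction n with
  | zero => rw [pf_zero]; simpa using R_one hR h1
  | succ n ih =>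
    rw [pf_succ, hR (dp 0).1 (dp 0).2 _ (ha 0) _,
      ih (Fin.tail a) (Fin.tail dp) (fun j => ha j.succ), Fin.sum_univ_succ]
    congr 1
    · rw [esgn_zero, pow_zero, one_smul]
      have : Function.update a 0 (R (a 0)) 0 = R (a 0) := Function.update_self _ _ _
      rw [pf_succ (Function.update a 0 (R (a 0))), this, Fin.tail_update_zero]
    · rw [Finset.mul_sum, Finset.smul_sum]
      refine Finset.sum_congr rfl fun j _ => ?_
      rw [pf_succ (Function.update a j.succ (R (a j.succ))),
        Function.update_of_ne (Fin.succ_ne_zero j).symm, Fin.tail_update_succ,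
        mul_smul_comm, smul_smul, esgn_succ, ← pow_add]
      rfl

lemma pf_update_mul_left
    (hcomm : ∀ k l m n, ∀ a ∈ gr k l, ∀ b ∈ gr m n,
      a * b = ((-1 : ℂ)) ^ ((k + l) * (m + n)) • (b * a))
    {n : ℕ} (a : Fin n → 𝔄) (dp : Fin n → ℕ × ℕ)
    (ha : ∀ k, a k ∈ gr (dp k).1 (dp k).2) (j : Fin n) {u : 𝔄} (hu : u ∈ gr 1 0)
    (y : 𝔄) :
    pf (Function.update a j (u * y))
      = ((-1 : ℂ)) ^ (esgn dp j) • (u * pf (Function.update a j y)) := by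
  induction n with
  | zero => exact j.elim0
  | succ n ih =>
    cases j using Fin.cases with
    | zero =>
        rw [esgn_zero, pow_zero, one_smul, pf_succ, pf_succ,
          Function.update_self, Function.update_self, Fin.tail_update_zero,
          Fin.tail_update_zero, mul_assoc]
    | succ j =>
        rw [pf_succ, Function.update_of_ne (Fin.succ_ne_zero j).symm, Fin.tail_update_succ,
          ih (Fin.tail a) (Fin.tail dp) (fun k => ha k.succ) j,
          mul_smul_comm, ← mul_assoc,
          hcomm (dp 0).1 (dp 0).2 1 0 _ (ha 0) _ hu,
          smul_mul_assoc, mul_assoc, smul_smul, ← pow_add,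
          pf_succ (Function.update a j.succ y),
          Function.update_of_ne (Fin.succ_ne_zero j).symm, Fin.tail_update_succ,
          esgn_succ]
        have hA : esgn (Fin.tail dp) j + ((dp 0).1 + (dp 0).2) * (1 + 0)
            = (dp 0).1 + (dp 0).2 + esgn (Fin.tail dp) j := by ring
        rw [hA]

end Stmt9
end
noncomputable section
set_option linter.unusedSectionVars false
set_option maxHeartbeats 1600000
namespace Stmt9

open Function LinearMap

variable {g : Type} [LieRing g] [LieAlgebra ℂ g]
variable {ι : Type} [Fintype ι]
variable {𝔄 : Type} [Ring 𝔄] [Algebra ℂ 𝔄]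

lemma gaBracket_add_left (X Y V : g ⊗[ℂ] 𝔄) :
    gaBracket g 𝔄 (X + Y) V = gaBracket g 𝔄 X V + gaBracket g 𝔄 Y V := by
  rw [map_add, LinearMap.add_apply]

lemma gaBracket_sub_left (X Y V : g ⊗[ℂ] 𝔄) :
    gaBracket g 𝔄 (X - Y) V = gaBracket g 𝔄 X V - gaBracket g 𝔄 Y V := by
  rw [map_sub, LinearMap.sub_apply]

lemma gaBracket_smul_left (c : ℂ) (X V : g ⊗[ℂ] 𝔄) :
    gaBracket g 𝔄 (c • X) V = c • gaBracket g 𝔄 X V := by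
  rw [map_smul, LinearMap.smul_apply]

variable (W : BigradedWeil g 𝔄) (b : Module.Basis ι ℂ g)

lemma mem_d {k l : ℕ} {Z : g ⊗[ℂ] 𝔄} (h : ∀ i, coordEv b i Z ∈ W.gr k l) (i : ι) :
    coordEv b i (LinearMap.lTensor g W.d Z) ∈ W.gr (k + 1) l := by
  rw [coordEv_lTensor]; exact W.d_gr k l _ (h i)

lemma mem_δ {k l : ℕ} {Z : g ⊗[ℂ] 𝔄} (h : ∀ i, coordEv b i Z ∈ W.gr k l) (i : ι) :
    coordEv b i (LinearMap.lTensor g W.δ Z) ∈ W.gr k (l + 1) := by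
  rw [coordEv_lTensor]; exact W.δ_gr k l _ (h i)

lemma mem_br {k l m n : ℕ} {Z V : g ⊗[ℂ] 𝔄} (hZ : ∀ i, coordEv b i Z ∈ W.gr k l)
    (hV : ∀ i, coordEv b i V ∈ W.gr m n) (i : ι) :
    coordEv b i (gaBracket g 𝔄 Z V) ∈ W.gr (k + m) (l + n) := by
  rw [coordEv_gaBracket]
  exact Submodule.sum_mem _ fun p _ => Submodule.sum_mem _ fun q _ =>
    Submodule.smul_mem _ _ (W.graded.2.1 k l m n _ (hZ p) _ (hV q))

lemma lT_d_d (Z : g ⊗[ℂ] 𝔄) :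
    LinearMap.lTensor g W.d (LinearMap.lTensor g W.d Z) = 0 := by
  have h : W.d ∘ₗ W.d = 0 := LinearMap.ext fun x => W.d_sq x
  rw [← LinearMap.lTensor_comp_apply, h, LinearMap.lTensor_zero, LinearMap.zero_apply]

lemma lT_d_δ (Z : g ⊗[ℂ] 𝔄) :
    LinearMap.lTensor g W.d (LinearMap.lTensor g W.δ Z)
      = -LinearMap.lTensor g W.δ (LinearMap.lTensor g W.d Z) := by
  have h : W.d ∘ₗ W.δ = -(W.δ ∘ₗ W.d) :=
    LinearMap.ext fun x => eq_neg_of_add_eq_zero_left (W.d_δ x)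
  rw [← LinearMap.lTensor_comp_apply, h, LinearMap.lTensor_neg, LinearMap.neg_apply,
    LinearMap.lTensor_comp_apply]

lemma dA_eq : LinearMap.lTensor g W.d W.A
    = W.F - (2⁻¹ : ℂ) • gaBracket g 𝔄 W.A W.A := by
  rw [W.eqF]; abel

lemma δF_eq : LinearMap.lTensor g W.δ W.F
    = W.B - gaBracket g 𝔄 W.α W.F := by
  rw [W.eqB]; abel

lemma sumδAdα_eq : LinearMap.lTensor g W.δ W.A + LinearMap.lTensor g W.d W.α
    = W.ψ - gaBracket g 𝔄 W.A W.α := by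
  rw [W.eqψ]; abel

lemma dφ_eq : LinearMap.lTensor g W.d W.φ
    = W.β - gaBracket g 𝔄 W.A W.φ := by
  rw [W.eqβ]; abel

end Stmt9
end
noncomputable section
set_option linter.unusedSectionVars false
set_option maxHeartbeats 1600000
namespace Stmt9

open Function LinearMap

variable {g : Type} [LieRing g] [LieAlgebra ℂ g]
variable {ι : Type} [Fintype ι]
variable {𝔄 : Type} [Ring 𝔄] [Algebra ℂ 𝔄]
lemma jAAA (W : BigradedWeil g 𝔄) (b : Module.Basis ι ℂ g) : gaBracket g 𝔄 (gaBracket g 𝔄 W.A W.A) W.A = 0 := by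
  have hcomm := W.graded.2.2.1
  have hA : ∀ i, coordEv b i W.A ∈ W.gr 1 0 := fun i => coord_mem_of_gvSub b W.A_mem i
  have hAA : ∀ i, coordEv b i (gaBracket g 𝔄 W.A W.A) ∈ W.gr 2 0 := mem_br W b hA hA
  have jac := gaBracket_jacobi b hcomm W.A hA hA
  have sym := gaBracket_symm b hcomm hAA hA
  have h3X : (3 : ℂ) • gaBracket g 𝔄 W.A (gaBracket g 𝔄 W.A W.A) = 0 := by
    linear_combination (norm := module) jac + sym
  have hX : gaBracket g 𝔄 W.A (gaBracket g 𝔄 W.A W.A) = 0 := by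
    rcases smul_eq_zero.mp h3X with h | h
    · exact absurd h (by norm_num)
    · exact h
  rw [sym, hX, smul_zero]

lemma jAAφ (W : BigradedWeil g 𝔄) (b : Module.Basis ι ℂ g) : gaBracket g 𝔄 W.A (gaBracket g 𝔄 W.A W.φ)
    = (2⁻¹ : ℂ) • gaBracket g 𝔄 (gaBracket g 𝔄 W.A W.A) W.φ := by
  have hcomm := W.graded.2.2.1
  have hA : ∀ i, coordEv b i W.A ∈ W.gr 1 0 := fun i => coord_mem_of_gvSub b W.A_mem i
  have jac := gaBracket_jacobi b hcomm W.φ hA hA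
  linear_combination (norm := module) (2⁻¹ : ℂ) • jac

lemma jAαA (W : BigradedWeil g 𝔄) (b : Module.Basis ι ℂ g) : gaBracket g 𝔄 (gaBracket g 𝔄 W.A W.α) W.A
    = -((2⁻¹ : ℂ) • gaBracket g 𝔄 (gaBracket g 𝔄 W.A W.A) W.α) := by
  have hcomm := W.graded.2.2.1
  have hA : ∀ i, coordEv b i W.A ∈ W.gr 1 0 := fun i => coord_mem_of_gvSub b W.A_mem i
  have hα : ∀ i, coordEv b i W.α ∈ W.gr 0 1 := fun i => coord_mem_of_gvSub b W.α_mem i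
  have hAA : ∀ i, coordEv b i (gaBracket g 𝔄 W.A W.A) ∈ W.gr 2 0 := mem_br W b hA hA
  have jac1 := gaBracket_jacobi b hcomm W.α hA hA
  have jac2 := gaBracket_jacobi b hcomm W.A hA hα
  have sym1 := gaBracket_symm b hcomm hα hA
  have sym2 := gaBracket_symm b hcomm hα hAA
  have hTP : gaBracket g 𝔄 W.A (gaBracket g 𝔄 W.α W.A)
      = gaBracket g 𝔄 W.A (gaBracket g 𝔄 W.A W.α) := by
    rw [sym1]; norm_num
  linear_combination (norm := module) (2⁻¹ : ℂ) • jac1 - jac2 + hTP + sym2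

lemma dF_eq (W : BigradedWeil g 𝔄) (b : Module.Basis ι ℂ g) : LinearMap.lTensor g W.d W.F = -gaBracket g 𝔄 W.A W.F := by
  have hcomm := W.graded.2.2.1
  have hA : ∀ i, coordEv b i W.A ∈ W.gr 1 0 := fun i => coord_mem_of_gvSub b W.A_mem i
  have hF : ∀ i, coordEv b i W.F ∈ W.gr 2 0 := fun i => coord_mem_of_gvSub b W.F_mem i
  have hdA : ∀ i, coordEv b i (LinearMap.lTensor g W.d W.A) ∈ W.gr 2 0 := mem_d W b hA
  have h1 : LinearMap.lTensor g W.d W.F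
      = LinearMap.lTensor g W.d (LinearMap.lTensor g W.d W.A)
        + (2⁻¹ : ℂ) • LinearMap.lTensor g W.d (gaBracket g 𝔄 W.A W.A) := by
    rw [W.eqF, map_add, map_smul]
  have h2 := lT_d_d W W.A
  have h3 := lTensor_gaBracket b W.d_antideriv W.A hA
  have h4 := gaBracket_symm b hcomm hA hdA
  have h5 : gaBracket g 𝔄 (LinearMap.lTensor g W.d W.A) W.A
      = gaBracket g 𝔄 W.F W.A
        - (2⁻¹ : ℂ) • gaBracket g 𝔄 (gaBracket g 𝔄 W.A W.A) W.A := by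
    rw [dA_eq, gaBracket_sub_left, gaBracket_smul_left]
  have h6 := jAAA W b
  have h7 := gaBracket_symm b hcomm hF hA
  linear_combination (norm := module) h1 + h2 + (2⁻¹ : ℂ) • h3 - (2⁻¹ : ℂ) • h4 + h5
    - (2⁻¹ : ℂ) • h6 + h7

end Stmt9
end
noncomputable section
set_option linter.unusedSectionVars false
set_option maxHeartbeats 1600000
namespace Stmt9

open Function LinearMap

variable {g : Type} [LieRing g] [LieAlgebra ℂ g]
variable {ι : Type} [Fintype ι]
variable {𝔄 : Type} [Ring 𝔄] [Algebra ℂ 𝔄]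

lemma dψ_eq (W : BigradedWeil g 𝔄) (b : Module.Basis ι ℂ g) :
    LinearMap.lTensor g W.d W.ψ = -W.B - gaBracket g 𝔄 W.A W.ψ := by
  have hcomm := W.graded.2.2.1
  have hA : ∀ i, coordEv b i W.A ∈ W.gr 1 0 := fun i => coord_mem_of_gvSub b W.A_mem i
  have hα : ∀ i, coordEv b i W.α ∈ W.gr 0 1 := fun i => coord_mem_of_gvSub b W.α_mem i
  have hF : ∀ i, coordEv b i W.F ∈ W.gr 2 0 := fun i => coord_mem_of_gvSub b W.F_mem i
  have hψ : ∀ i, coordEv b i W.ψ ∈ W.gr 1 1 := fun i => coord_mem_of_gvSub b W.ψ_mem i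
  have hδA : ∀ i, coordEv b i (LinearMap.lTensor g W.δ W.A) ∈ W.gr 1 1 := mem_δ W b hA
  have hdα : ∀ i, coordEv b i (LinearMap.lTensor g W.d W.α) ∈ W.gr 1 1 := mem_d W b hα
  have s1 : LinearMap.lTensor g W.d W.ψ
      = LinearMap.lTensor g W.d (LinearMap.lTensor g W.δ W.A)
        + LinearMap.lTensor g W.d (LinearMap.lTensor g W.d W.α)
        + LinearMap.lTensor g W.d (gaBracket g 𝔄 W.A W.α) := by
    rw [W.eqψ, map_add, map_add]
  have s2 := lT_d_δ W W.A
  have s3 : LinearMap.lTensor g W.δ (LinearMap.lTensor g W.d W.A)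
      = LinearMap.lTensor g W.δ W.F
        - (2⁻¹ : ℂ) • LinearMap.lTensor g W.δ (gaBracket g 𝔄 W.A W.A) := by
    rw [dA_eq, map_sub, map_smul]
  have s4 := lTensor_gaBracket b W.δ_antideriv W.A hA
  have s5 := gaBracket_symm b hcomm hA hδA
  have s6 := δF_eq W
  have s7 := lT_d_d W W.α
  have s8 := lTensor_gaBracket b W.d_antideriv W.α hA
  have s9 : gaBracket g 𝔄 (LinearMap.lTensor g W.d W.A) W.α
      = gaBracket g 𝔄 W.F W.α
        - (2⁻¹ : ℂ) • gaBracket g 𝔄 (gaBracket g 𝔄 W.A W.A) W.α := by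
    rw [dA_eq, gaBracket_sub_left, gaBracket_smul_left]
  have s10 := gaBracket_symm b hcomm hA hdα
  have s11 : gaBracket g 𝔄 (LinearMap.lTensor g W.δ W.A) W.A
        + gaBracket g 𝔄 (LinearMap.lTensor g W.d W.α) W.A
      = gaBracket g 𝔄 W.ψ W.A - gaBracket g 𝔄 (gaBracket g 𝔄 W.A W.α) W.A := by
    rw [← gaBracket_add_left, sumδAdα_eq, gaBracket_sub_left]
  have s12 := jAαA W b
  have s13 := gaBracket_symm b hcomm hψ hA
  have s14 := gaBracket_symm b hcomm hα hF
  linear_combination (norm := module) s1 + s2 - s3 + (2⁻¹ : ℂ) • s4 - (2⁻¹ : ℂ) • s5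
    - s6 + s7 + s8 + s9 - s10 + s11 - s12 + s13 + s14

lemma dB_eq (W : BigradedWeil g 𝔄) (b : Module.Basis ι ℂ g) :
    LinearMap.lTensor g W.d W.B
      = -gaBracket g 𝔄 W.A W.B - gaBracket g 𝔄 W.F W.ψ := by
  have hcomm := W.graded.2.2.1
  have hA : ∀ i, coordEv b i W.A ∈ W.gr 1 0 := fun i => coord_mem_of_gvSub b W.A_mem i
  have hα : ∀ i, coordEv b i W.α ∈ W.gr 0 1 := fun i => coord_mem_of_gvSub b W.α_mem i
  have hF : ∀ i, coordEv b i W.F ∈ W.gr 2 0 := fun i => coord_mem_of_gvSub b W.F_mem i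
  have hψ : ∀ i, coordEv b i W.ψ ∈ W.gr 1 1 := fun i => coord_mem_of_gvSub b W.ψ_mem i
  have t1 : LinearMap.lTensor g W.d W.B
      = LinearMap.lTensor g W.d (LinearMap.lTensor g W.δ W.F)
        + LinearMap.lTensor g W.d (gaBracket g 𝔄 W.α W.F) := by
    rw [W.eqB, map_add]
  have t2 := lT_d_δ W W.F
  have t3 : LinearMap.lTensor g W.δ (LinearMap.lTensor g W.d W.F)
      = -LinearMap.lTensor g W.δ (gaBracket g 𝔄 W.A W.F) := by
    rw [dF_eq W b, map_neg]
  have t4 := lTensor_gaBracket b W.δ_antideriv W.F hA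
  have t5r : gaBracket g 𝔄 W.A (LinearMap.lTensor g W.δ W.F)
      = gaBracket g 𝔄 W.A W.B - gaBracket g 𝔄 W.A (gaBracket g 𝔄 W.α W.F) := by
    rw [δF_eq W, map_sub]
  have t6 := lTensor_gaBracket b W.d_antideriv W.F hα
  have t7 : gaBracket g 𝔄 W.α (LinearMap.lTensor g W.d W.F)
      = -gaBracket g 𝔄 W.α (gaBracket g 𝔄 W.A W.F) := by
    rw [dF_eq W b, map_neg]
  have t8 : gaBracket g 𝔄 (LinearMap.lTensor g W.δ W.A) W.F
        + gaBracket g 𝔄 (LinearMap.lTensor g W.d W.α) W.F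
      = gaBracket g 𝔄 W.ψ W.F - gaBracket g 𝔄 (gaBracket g 𝔄 W.A W.α) W.F := by
    rw [← gaBracket_add_left, sumδAdα_eq, gaBracket_sub_left]
  have t9 := gaBracket_jacobi b hcomm W.F hA hα
  have t10 := gaBracket_symm b hcomm hψ hF
  linear_combination (norm := module) t1 + t2 - t3 + t4 - t5r + t6 - t7 + t8 + t9 + t10

lemma dβ_eq (W : BigradedWeil g 𝔄) (b : Module.Basis ι ℂ g) :
    LinearMap.lTensor g W.d W.β
      = gaBracket g 𝔄 W.F W.φ - gaBracket g 𝔄 W.A W.β := by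
  have hcomm := W.graded.2.2.1
  have hA : ∀ i, coordEv b i W.A ∈ W.gr 1 0 := fun i => coord_mem_of_gvSub b W.A_mem i
  have hφ : ∀ i, coordEv b i W.φ ∈ W.gr 0 2 := fun i => coord_mem_of_gvSub b W.φ_mem i
  have u1 : LinearMap.lTensor g W.d W.β
      = LinearMap.lTensor g W.d (LinearMap.lTensor g W.d W.φ)
        + LinearMap.lTensor g W.d (gaBracket g 𝔄 W.A W.φ) := by
    rw [W.eqβ, map_add]
  have u2 := lT_d_d W W.φ
  have u3 := lTensor_gaBracket b W.d_antideriv W.φ hA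
  have u4 : gaBracket g 𝔄 (LinearMap.lTensor g W.d W.A) W.φ
      = gaBracket g 𝔄 W.F W.φ
        - (2⁻¹ : ℂ) • gaBracket g 𝔄 (gaBracket g 𝔄 W.A W.A) W.φ := by
    rw [dA_eq, gaBracket_sub_left, gaBracket_smul_left]
  have u5 : gaBracket g 𝔄 W.A (LinearMap.lTensor g W.d W.φ)
      = gaBracket g 𝔄 W.A W.β - gaBracket g 𝔄 W.A (gaBracket g 𝔄 W.A W.φ) := by
    rw [dφ_eq W, map_sub]
  have u6 := jAAφ W b
  linear_combination (norm := module) u1 + u2 + u3 + u4 - u5 + u6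

end Stmt9
end
noncomputable section
set_option linter.unusedSectionVars false
set_option maxHeartbeats 1600000
namespace Stmt9

open Function LinearMap

variable {g : Type} [LieRing g] [LieAlgebra ℂ g]
variable {ι : Type} [Fintype ι]
variable {𝔄 : Type} [Ring 𝔄] [Algebra ℂ 𝔄]

lemma upd_comp (b : Module.Basis ι ℂ g) {n : ℕ} (w : Fin n → ι) (j : Fin n) (i : ι) :
    (fun k => b (Function.update w j i k)) = Function.update (fun k => b (w k)) j (b i) := by
  funext k
  rcases eq_or_ne k j with rfl | h
  · simp
  · simp [Function.update_of_ne h]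

lemma ml_update_sum {n : ℕ} (I : MultilinearMap ℂ (fun _ : Fin n => g) ℂ) (v : Fin n → g)
    (j : Fin n) (b : Module.Basis ι ℂ g) (z : g) :
    ∑ i, b.coord i z * I (Function.update v j (b i)) = I (Function.update v j z) := by
  let L : g →ₗ[ℂ] ℂ :=
    { toFun := fun x => I (Function.update v j x)
      map_add' := fun x y => I.map_update_add v j x y
      map_smul' := fun c x => I.map_update_smul v j c x }
  have hz : z = ∑ i, b.coord i z • b i := by
    simp only [Module.Basis.coord_apply]
    exact (b.sum_repr z).symm
  calc ∑ i, b.coord i z * I (Function.update v j (b i))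
      = ∑ i, L (b.coord i z • b i) := by
        refine Finset.sum_congr rfl fun i _ => ?_
        rw [map_smul]
        simp [L, smul_eq_mul]
    _ = L (∑ i, b.coord i z • b i) := (map_sum L _ _).symm
    _ = I (Function.update v j z) := by rw [← hz]; rfl
  
lemma inv_sum {n : ℕ} {I : MultilinearMap ℂ (fun _ : Fin n => g) ℂ} (hI : IsInvForm I)
    (v : Fin n → g) (X : g) :
    ∑ j, I (Function.update v j ⁅X, v j⁆) = 0 := by
  have h := hI X v
  have : ∀ j : Fin n, I (Function.update v j ⁅X, v j⁆)
      = -I (Function.update v j ⁅v j, X⁆) := by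
    intro j
    rw [← lie_skew, show -⁅v j, X⁆ = (-1 : ℂ) • ⁅v j, X⁆ from (neg_one_smul ℂ _).symm,
      I.map_update_smul v j, neg_one_smul]
  rw [Finset.sum_congr rfl fun j _ => this j, Finset.sum_neg_distrib, h, neg_zero]

lemma sum_swap_update {n : ℕ} {M : Type} [AddCommMonoid M] (j : Fin n)
    (E : (Fin n → ι) → ι → M) :
    ∑ iv : Fin n → ι, ∑ q : ι, E iv q
      = ∑ w : Fin n → ι, ∑ i : ι, E (Function.update w j i) (w j) := by
  classical
  let e : ((Fin n → ι) × ι) ≃ ((Fin n → ι) × ι) :=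
    { toFun := fun x => (Function.update x.1 j x.2, x.1 j)
      invFun := fun x => (Function.update x.1 j x.2, x.1 j)
      left_inv := fun x => by
        cases x with
        | mk w i => simp [Function.update_idem, Function.update_eq_self]
      right_inv := fun x => by
        cases x with
        | mk w i => simp [Function.update_idem, Function.update_eq_self] }
  calc ∑ iv : Fin n → ι, ∑ q : ι, E iv q
      = ∑ x : (Fin n → ι) × ι, E x.1 x.2 :=
        (Fintype.sum_prod_type (f := fun x : (Fin n → ι) × ι => E x.1 x.2)).symm
    _ = ∑ x : (Fin n → ι) × ι, E (Function.update x.1 j x.2) (x.1 j) :=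
        (Equiv.sum_comp e (fun x => E x.1 x.2)).symm
    _ = ∑ w : Fin n → ι, ∑ i : ι, E (Function.update w j i) (w j) :=
        Fintype.sum_prod_type
          (f := fun x : (Fin n → ι) × ι => E (Function.update x.1 j x.2) (x.1 j))

lemma main_sum_zero {n : ℕ} (t : (Fin n → ι) → ℂ) (cc : ι → ι → ι → ℂ)
    (C : ι → (Fin n → ι) → 𝔄)
    (hinv : ∀ p (w : Fin n → ι), ∑ j, ∑ i, t (Function.update w j i) * cc i p (w j) = 0) :
    ∑ iv : Fin n → ι, ∑ j : Fin n, ∑ p : ι, ∑ q : ι,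
      (t iv * cc (iv j) p q) • C p (Function.update iv j q) = 0 := by
  classical
  rw [Finset.sum_comm]
  have step1 : ∀ j : Fin n,
      (∑ iv : Fin n → ι, ∑ p : ι, ∑ q : ι,
        (t iv * cc (iv j) p q) • C p (Function.update iv j q))
      = ∑ p : ι, ∑ w : Fin n → ι,
          (∑ i : ι, t (Function.update w j i) * cc i p (w j)) • C p w := by
    intro j
    rw [Finset.sum_comm]
    refine Finset.sum_congr rfl fun p _ => ?_
    rw [sum_swap_update j
      (fun iv q => (t iv * cc (iv j) p q) • C p (Function.update iv j q))]
    refine Finset.sum_congr rfl fun w _ => ?_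
    rw [Finset.sum_smul]
    refine Finset.sum_congr rfl fun i _ => ?_
    rw [Function.update_self, Function.update_idem, Function.update_eq_self]
  rw [Finset.sum_congr rfl fun j _ => step1 j, Finset.sum_comm]
  refine Finset.sum_eq_zero fun p _ => ?_
  rw [Finset.sum_comm]
  refine Finset.sum_eq_zero fun w _ => ?_
  rw [← Finset.sum_smul, hinv p w, zero_smul]

end Stmt9
end
noncomputable section
set_option linter.unusedSectionVars false
set_option maxHeartbeats 1600000
namespace Stmt9

open Function LinearMap

variable {g : Type} [LieRing g] [LieAlgebra ℂ g]
variable {ι : Type} [Fintype ι]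
variable {𝔄 : Type} [Ring 𝔄] [Algebra ℂ 𝔄]

lemma R_multiEval_zero (W : BigradedWeil g 𝔄) (b : Module.Basis ι ℂ g)
    {R : 𝔄 →ₗ[ℂ] 𝔄} (hR : IsAntideriv W.gr R)
    (hgen : ∀ m : Fin 5, LinearMap.lTensor g R (W.genOf m)
      = -gaBracket g 𝔄 W.A (W.genOf m))
    {n : ℕ} (I : MultilinearMap ℂ (fun _ : Fin n => g) ℂ) (hI : IsInvForm I)
    (c : Fin n → Fin 5) :
    R (multiEval b I (fun j => W.genOf (c j))) = 0 := by
  classical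
  have hcomm := W.graded.2.2.1
  have h1 := W.graded.1
  have hA : ∀ i, coordEv b i W.A ∈ W.gr 1 0 := fun i => coord_mem_of_gvSub b W.A_mem i
  have hmemg : ∀ m : Fin 5, ∀ i, coordEv b i (W.genOf m)
      ∈ W.gr ((![(2,0),(1,1),(0,2),(2,1),(1,2)] : Fin 5 → ℕ × ℕ) m).1
             ((![(2,0),(1,1),(0,2),(2,1),(1,2)] : Fin 5 → ℕ × ℕ) m).2 := by
    intro m
    fin_cases m
    · exact fun i => coord_mem_of_gvSub b W.F_mem i
    · exact fun i => coord_mem_of_gvSub b W.ψ_mem i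
    · exact fun i => coord_mem_of_gvSub b W.φ_mem i
    · exact fun i => coord_mem_of_gvSub b W.B_mem i
    · exact fun i => coord_mem_of_gvSub b W.β_mem i
  set dp : Fin n → ℕ × ℕ := fun j => (![(2,0),(1,1),(0,2),(2,1),(1,2)] : Fin 5 → ℕ × ℕ) (c j)
    with hdp
  set av : (Fin n → ι) → Fin n → 𝔄 := fun iv j => coordEv b (iv j) (W.genOf (c j)) with hav
  have hmem : ∀ (iv : Fin n → ι) (j : Fin n), av iv j ∈ W.gr (dp j).1 (dp j).2 :=
    fun iv j => hmemg (c j) (iv j)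
  have hupd : ∀ (iv : Fin n → ι) (j : Fin n) (q : ι),
      Function.update (av iv) j (coordEv b q (W.genOf (c j))) = av (Function.update iv j q) := by
    intro iv j q
    funext k
    rcases eq_or_ne k j with rfl | h
    · simp [hav]
    · simp [hav, Function.update_of_ne h]
  have sgn2 : ∀ (j : Fin n) (x : 𝔄),
      ((-1 : ℂ)) ^ (esgn dp j) • ((-1 : ℂ)) ^ (esgn dp j) • x = x := by
    intro j x
    rw [smul_smul, ← pow_add]
    rw [Even.neg_one_pow ⟨esgn dp j, rfl⟩, one_smul]
  have term : ∀ (iv : Fin n → ι) (j : Fin n) (p q : ι),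
      pf (Function.update (av iv) j (b.coord (iv j) ⁅b p, b q⁆ •
          (coordEv b p W.A * coordEv b q (W.genOf (c j)))))
        = b.coord (iv j) ⁅b p, b q⁆ • (((-1 : ℂ)) ^ (esgn dp j) •
            (coordEv b p W.A * pf (av (Function.update iv j q)))) := by
    intro iv j p q
    rw [pf_update_smul, pf_update_mul_left hcomm (av iv) dp (hmem iv) j (hA p), hupd]
  have key : ∀ (iv : Fin n → ι) (j : Fin n),
      ((-1 : ℂ)) ^ (esgn dp j) • pf (Function.update (av iv) j (R (av iv j)))
        = -∑ p, ∑ q, b.coord (iv j) ⁅b p, b q⁆ •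
            (coordEv b p W.A * pf (av (Function.update iv j q))) := by
    intro iv j
    have e1 : R (av iv j) = coordEv b (iv j) (LinearMap.lTensor g R (W.genOf (c j))) :=
      (coordEv_lTensor b R (iv j) _).symm
    rw [e1, hgen (c j), map_neg, coordEv_gaBracket b, pf_update_neg, pf_update_sum]
    rw [Finset.sum_congr rfl fun p (_ : p ∈ Finset.univ) =>
      pf_update_sum (av iv) j Finset.univ
        (fun q => b.coord (iv j) ⁅b p, b q⁆ •
          (coordEv b p W.A * coordEv b q (W.genOf (c j))))]
    rw [Finset.sum_congr rfl fun p (_ : p ∈ Finset.univ) =>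
      Finset.sum_congr rfl fun q (_ : q ∈ Finset.univ) => term iv j p q]
    rw [smul_neg]
    refine neg_inj.mpr ?_
    rw [Finset.smul_sum]
    refine Finset.sum_congr rfl fun p _ => ?_
    rw [Finset.smul_sum]
    refine Finset.sum_congr rfl fun q _ => ?_
    rw [smul_comm]
    rw [sgn2]
  have expand : R (multiEval b I fun j => W.genOf (c j))
      = ∑ iv : Fin n → ι, I (fun j => b (iv j)) •
          ∑ j, ((-1 : ℂ)) ^ (esgn dp j) • pf (Function.update (av iv) j (R (av iv j))) := by
    simp only [multiEval, map_sum, map_smul]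
    refine Finset.sum_congr rfl fun iv _ => ?_
    congr 1
    exact antideriv_pf hR h1 (av iv) dp (hmem iv)
  have expand2 : ∀ iv : Fin n → ι,
      I (fun j => b (iv j)) •
          ∑ j, ((-1 : ℂ)) ^ (esgn dp j) • pf (Function.update (av iv) j (R (av iv j)))
        = -∑ j, ∑ p, ∑ q, (I (fun k => b (iv k)) * b.coord (iv j) ⁅b p, b q⁆) •
            (coordEv b p W.A * pf (av (Function.update iv j q))) := by
    intro iv
    rw [Finset.sum_congr rfl fun j (_ : j ∈ Finset.univ) => key iv j,
      Finset.sum_neg_distrib, smul_neg, Finset.smul_sum]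
    congr 1
    refine Finset.sum_congr rfl fun j _ => ?_
    rw [Finset.smul_sum]
    refine Finset.sum_congr rfl fun p _ => ?_
    rw [Finset.smul_sum]
    refine Finset.sum_congr rfl fun q _ => ?_
    rw [smul_smul]
  rw [expand, Finset.sum_congr rfl fun iv (_ : iv ∈ Finset.univ) => expand2 iv,
    Finset.sum_neg_distrib, neg_eq_zero]
  refine main_sum_zero (fun iv => I fun k => b (iv k)) (fun i p q => b.coord i ⁅b p, b q⁆)
    (fun p w => coordEv b p W.A * pf (av w)) ?_
  intro p w
  have hper : ∀ j : Fin n,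
      (∑ i, I (fun k => b (Function.update w j i k)) * b.coord i ⁅b p, b (w j)⁆)
        = I (Function.update (fun k => b (w k)) j ⁅b p, b (w j)⁆) := by
    intro j
    rw [← ml_update_sum I (fun k => b (w k)) j b ⁅b p, b (w j)⁆]
    refine Finset.sum_congr rfl fun i _ => ?_
    rw [upd_comp b w j i, mul_comm]
  rw [Finset.sum_congr rfl fun j (_ : j ∈ Finset.univ) => hper j]
  exact inv_sum hI (fun k => b (w k)) (b p)

end Stmt9
end
noncomputable section
set_option linter.unusedSectionVars false
set_option maxHeartbeats 1600000
set_option linter.unusedVariables false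

/-- Lemma 2.1: if `d₁`, `d₂` are the antiderivations with
`d₁ψ = −B`, `d₁φ = β`, `d₂B = −[F,ψ]`, `d₂β = [F,φ]` and vanishing on the other
generators, then `d` coincides with `d₁ + d₂` on the base `ℬ(g)`. -/
theorem stmt_9 (g : Type) [LieRing g] [LieAlgebra ℂ g] [FiniteDimensional ℂ g]
    {ι : Type} [Fintype ι] (b : Module.Basis ι ℂ g)
    (𝔄 : Type) [Ring 𝔄] [Algebra ℂ 𝔄] (W : BigradedWeil g 𝔄)
    (d₁ d₂ : 𝔄 →ₗ[ℂ] 𝔄)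
    (h₁ : IsAntideriv W.gr d₁) (h₂ : IsAntideriv W.gr d₂)
    (h₁ψ : LinearMap.lTensor g d₁ W.ψ = -W.B)
    (h₁φ : LinearMap.lTensor g d₁ W.φ = W.β)
    (h₁A : LinearMap.lTensor g d₁ W.A = 0) (h₁α : LinearMap.lTensor g d₁ W.α = 0)
    (h₁F : LinearMap.lTensor g d₁ W.F = 0) (h₁ξ : LinearMap.lTensor g d₁ W.ξ = 0)
    (h₁B : LinearMap.lTensor g d₁ W.B = 0) (h₁β : LinearMap.lTensor g d₁ W.β = 0)
    (h₂B : LinearMap.lTensor g d₂ W.B = -(gaBracket g 𝔄 W.F W.ψ))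
    (h₂β : LinearMap.lTensor g d₂ W.β = gaBracket g 𝔄 W.F W.φ)
    (h₂A : LinearMap.lTensor g d₂ W.A = 0) (h₂α : LinearMap.lTensor g d₂ W.α = 0)
    (h₂F : LinearMap.lTensor g d₂ W.F = 0) (h₂φ : LinearMap.lTensor g d₂ W.φ = 0)
    (h₂ψ : LinearMap.lTensor g d₂ W.ψ = 0) (h₂ξ : LinearMap.lTensor g d₂ W.ξ = 0) :
    ∀ x ∈ baseB b W, W.d x = d₁ x + d₂ x := by
  classical
  open Stmt9 in
  have hR : IsAntideriv W.gr (W.d - d₁ - d₂) := by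
    intro k l a ha c
    simp only [LinearMap.sub_apply]
    rw [W.d_antideriv k l a ha c, h₁ k l a ha c, h₂ k l a ha c]
    simp only [mul_sub, sub_mul, smul_sub]
    abel
  have hsub : ∀ Z : g ⊗[ℂ] 𝔄, LinearMap.lTensor g (W.d - d₁ - d₂) Z
      = LinearMap.lTensor g W.d Z - LinearMap.lTensor g d₁ Z - LinearMap.lTensor g d₂ Z := by
    intro Z
    rw [LinearMap.lTensor_sub, LinearMap.lTensor_sub]
    simp [LinearMap.sub_apply]
  have hgen : ∀ m : Fin 5, LinearMap.lTensor g (W.d - d₁ - d₂) (W.genOf m)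
      = -gaBracket g 𝔄 W.A (W.genOf m) := by
    intro m
    fin_cases m
    · show LinearMap.lTensor g (W.d - d₁ - d₂) W.F = -gaBracket g 𝔄 W.A W.F
      rw [hsub, Stmt9.dF_eq W b, h₁F, h₂F]; abel
    · show LinearMap.lTensor g (W.d - d₁ - d₂) W.ψ = -gaBracket g 𝔄 W.A W.ψ
      rw [hsub, Stmt9.dψ_eq W b, h₁ψ, h₂ψ]; abel
    · show LinearMap.lTensor g (W.d - d₁ - d₂) W.φ = -gaBracket g 𝔄 W.A W.φ
      rw [hsub, Stmt9.dφ_eq W, h₁φ, h₂φ]; abel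
    · show LinearMap.lTensor g (W.d - d₁ - d₂) W.B = -gaBracket g 𝔄 W.A W.B
      rw [hsub, Stmt9.dB_eq W b, h₁B, h₂B]; abel
    · show LinearMap.lTensor g (W.d - d₁ - d₂) W.β = -gaBracket g 𝔄 W.A W.β
      rw [hsub, Stmt9.dβ_eq W b, h₁β, h₂β]; abel
  intro x hx
  have hzero : (W.d - d₁ - d₂) x = 0 := by
    refine Submodule.span_induction ?_ ?_ ?_ ?_ hx
    · rintro z ⟨n, I, cst, hI, rfl⟩
      exact Stmt9.R_multiEval_zero W b hR hgen I hI cst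
    · simp
    · intro a b' _ _ ha hb; rw [map_add, ha, hb, add_zero]
    · intro c a _ ha; rw [map_smul, ha, smul_zero]
  have h2 : W.d x - (d₁ x + d₂ x) = 0 := by
    have := hzero
    simp only [LinearMap.sub_apply] at this
    rw [sub_sub] at this
    exact this
  exact sub_eq_zero.mp h2

end
end
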